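/- A function F : ℕ^ℕ → ℕ is strongly continuous if and only if for each fan T ⊆ ℕ* there exists N ∈ ℕ such that for all paths α in T and all β ∈ ℕ^ℕ, if α and β agree on their first N values then F(α) = F(β). -/
import Mathlib


/-- Initial segment of `α` of length `n`. -/
def seg (α : ℕ → ℕ) (n : ℕ) : List ℕ := List.ofFn (fun i : Fin n => α i)

/-- `a` followed by the constant zero sequence. -/
def zext (a : List ℕ) : ℕ → ℕ := fun i => a.getD i 0

/-- Upward closure under extension. -/
def extU (U : Set (List ℕ)) : Set (List ℕ) := {a | ∃ b ∈ U, b <+: a}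

/-- The cover of formal Baire space, generated by η, ζ, ϝ. -/
inductive Cover : List ℕ → Set (List ℕ) → Prop
  | eta {a : List ℕ} {U : Set (List ℕ)} : a ∈ U → Cover a U
  | zeta {a : List ℕ} {U : Set (List ℕ)} (k : ℕ) : Cover a U → Cover (a ++ [k]) U
  | digamma {a : List ℕ} {U : Set (List ℕ)} : (∀ n, Cover (a ++ [n]) U) → Cover a U

/-- A spread: a decidable tree where every node has a child. -/
def IsSpread (T : Set (List ℕ)) : Prop :=
  (∀ a, a ∈ T ∨ a ∉ T) ∧ (∀ a b : List ℕ, a <+: b → b ∈ T → a ∈ T) ∧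
  (∀ a ∈ T, ∃ n, a ++ [n] ∈ T)

/-- A fan: a finitely branching spread. -/
def IsFan (T : Set (List ℕ)) : Prop :=
  IsSpread T ∧ ∀ a ∈ T, ∃ N, ∀ n, a ++ [n] ∈ T → n ≤ N

/-- `α` is a path in the tree `T`. -/
def IsPath (T : Set (List ℕ)) (α : ℕ → ℕ) : Prop := ∀ n, seg α n ∈ T

/-- A c-bar: a c-set barring every sequence. -/
def IsCBar (P : Set (List ℕ)) : Prop :=
  (∃ δ : List ℕ → ℕ, ∀ a, a ∈ P ↔ ∀ b, δ a = δ (a ++ b)) ∧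
  (∀ α : ℕ → ℕ, ∃ n, seg α n ∈ P)

/-- Pointwise continuity for `F : ℕ^ℕ → ℕ`. -/
def PtwiseCts (F : (ℕ → ℕ) → ℕ) : Prop :=
  ∀ α : ℕ → ℕ, ∃ n, ∀ β : ℕ → ℕ, seg β n = seg α n → F β = F α

/-- An inductive subset of ℕ*. -/
def Inductive (Q : Set (List ℕ)) : Prop := ∀ a, (∀ n, a ++ [n] ∈ Q) → a ∈ Q

/-- Preimage of a subset of ℕ under a relation r ⊆ ℕ* × ℕ. -/
def rInv (r : List ℕ → ℕ → Prop) (D : Set ℕ) : Set (List ℕ) := {a | ∃ n ∈ D, r a n}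

/-- Formal topology map from formal Baire space to formal natural numbers. -/
def IsFTopMap (r : List ℕ → ℕ → Prop) : Prop :=
  Cover [] (rInv r Set.univ) ∧
  ∀ n m : ℕ, ∀ a ∈ extU (rInv r {n}) ∩ extU (rInv r {m}),
    Cover a (rInv r {l | l = n ∧ n = m})

/-- `F` is formally continuous: induced by a formal topology map on points. -/
def FormallyCts (F : (ℕ → ℕ) → ℕ) : Prop :=
  ∃ r : List ℕ → ℕ → Prop, IsFTopMap r ∧
    ∀ α : ℕ → ℕ, {n | ∃ k, r (seg α k) n} = {F α}

/-- The class of Brouwer-operations. -/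
inductive IsBrouwerOp : (List ℕ → ℕ) → Prop
  | const (n : ℕ) : IsBrouwerOp (fun _ => n + 1)
  | sup {γ : List ℕ → ℕ} : γ [] = 0 →
      (∀ n, IsBrouwerOp (fun a => γ (n :: a))) → IsBrouwerOp γ

/-- `bar γ`: minimal sequences on which `γ` is positive. -/
def barOf (γ : List ℕ → ℕ) : Set (List ℕ) :=
  {a | 0 < γ a ∧ ∀ b : List ℕ, b <+: a → b ≠ a → γ b = 0}

/-- The set presentation `Cov` of formal Baire space. -/
inductive Cov : List ℕ → Set (List ℕ) → Prop
  | single (a : List ℕ) : Cov a {a}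
  | union {a : List ℕ} {U : ℕ → Set (List ℕ)} :
      (∀ n, Cov (a ++ [n]) (U n)) → Cov a (⋃ n, U n)

attribute [local instance] PiNat.metricSpaceNatNat

/-- Strong continuity: uniform continuity near every compact subset. -/
def StronglyCts (F : (ℕ → ℕ) → ℕ) : Prop :=
  ∀ K : Set (ℕ → ℕ), IsCompact K → ∀ ε : ℝ, 0 < ε → ∃ δ : ℝ, 0 < δ ∧
    ∀ x u : ℕ → ℕ, x ∈ K → dist x u < δ → |(F x : ℝ) - F u| < ε


lemma seg_length (α : ℕ → ℕ) (n : ℕ) : (seg α n).length = n := by simp [seg]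

lemma seg_succ (α : ℕ → ℕ) (n : ℕ) : seg α (n+1) = seg α n ++ [α n] := by
  rw [seg, List.ofFn_succ', List.concat_eq_append]
  simp [seg, Fin.castSucc]

lemma seg_eq_iff {α β : ℕ → ℕ} {N : ℕ} : seg α N = seg β N ↔ ∀ i < N, α i = β i := by
  simp [seg, List.ofFn_inj, funext_iff, Fin.forall_iff]

lemma seg_prefix (α : ℕ → ℕ) {n m : ℕ} (h : n ≤ m) : seg α n <+: seg α m := by
  induction m with
  | zero => simp_all
  | succ m ih =>
    rcases Nat.lt_or_ge n (m+1) with h' | h'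
    · exact (ih (Nat.lt_succ_iff.mp h')).trans (by rw [seg_succ]; exact List.prefix_append _ _)
    · have : n = m + 1 := le_antisymm h h'
      subst this; exact List.prefix_refl _

lemma fan_level_finite {T : Set (List ℕ)} (hT : IsFan T) (n : ℕ) :
    {a | a ∈ T ∧ a.length = n}.Finite := by
  induction n with
  | zero =>
    apply Set.Finite.subset (Set.finite_singleton ([] : List ℕ))
    rintro a ⟨-, ha⟩
    simpa using List.length_eq_zero_iff.mp ha
  | succ n ih =>
    have hsub : {a | a ∈ T ∧ a.length = n + 1} ⊆
        ⋃ b ∈ {a | a ∈ T ∧ a.length = n}, (fun k => b ++ [k]) '' {k | b ++ [k] ∈ T} := by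
      rintro a ⟨haT, hlen⟩
      have hne : a ≠ [] := by intro h; simp [h] at hlen
      have hsplit : a.dropLast ++ [a.getLast hne] = a := List.dropLast_append_getLast hne
      have hdrop : a.dropLast ∈ T := hT.1.2.1 _ _ (List.dropLast_prefix a) haT
      have hdlen : a.dropLast.length = n := by
        simp [List.length_dropLast, hlen]
      refine Set.mem_biUnion (show a.dropLast ∈ {a | a ∈ T ∧ a.length = n} from ⟨hdrop, hdlen⟩) ?_
      exact ⟨a.getLast hne, show a.dropLast ++ [a.getLast hne] ∈ T by rw [hsplit]; exact haT, hsplit⟩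
    refine Set.Finite.subset (Set.Finite.biUnion ih ?_) hsub
    rintro a ⟨haT, -⟩
    obtain ⟨N, hN⟩ := hT.2 a haT
    exact (((Set.finite_Iic N).subset hN).image _)

theorem fan_paths_isCompact {T : Set (List ℕ)} (hT : IsFan T) :
    IsCompact {α : ℕ → ℕ | IsPath T α} := by
  classical
  set V : ℕ → Set ℕ := fun n => {k | ∃ a, (a ∈ T ∧ a.length = n) ∧ a ++ [k] ∈ T} with hV
  have hVfin : ∀ n, (V n).Finite := by
    intro n
    have hsub : V n ⊆ ⋃ a ∈ {a | a ∈ T ∧ a.length = n}, {k | a ++ [k] ∈ T} := by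
      rintro k ⟨a, ha, hk⟩; exact Set.mem_biUnion ha hk
    refine Set.Finite.subset (Set.Finite.biUnion (fan_level_finite hT n) ?_) hsub
    rintro a ⟨haT, -⟩
    obtain ⟨N, hN⟩ := hT.2 a haT
    exact (Set.finite_Iic N).subset hN
  have hsub : {α : ℕ → ℕ | IsPath T α} ⊆ Set.pi Set.univ V := by
    intro α hα i _
    exact ⟨seg α i, ⟨hα i, seg_length α i⟩, by rw [← seg_succ]; exact hα (i+1)⟩
  have hclosed : IsClosed {α : ℕ → ℕ | IsPath T α} := by
    rw [← isOpen_compl_iff, isOpen_iff_forall_mem_open]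
    intro α hα
    simp only [Set.mem_compl_iff, Set.mem_setOf_eq, IsPath, not_forall] at hα
    obtain ⟨n, hn⟩ := hα
    refine ⟨PiNat.cylinder (E := fun _ => ℕ) α n, ?_, PiNat.isOpen_cylinder (E := fun _ => ℕ) α n, PiNat.self_mem_cylinder (E := fun _ => ℕ) α n⟩
    intro β hβ
    simp only [Set.mem_compl_iff, Set.mem_setOf_eq, IsPath, not_forall]
    refine ⟨n, ?_⟩
    have hseg : seg β n = seg α n := seg_eq_iff.mpr (fun i hi => PiNat.mem_cylinder_iff.mp hβ i hi)
    rwa [hseg]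
  exact (isCompact_univ_pi fun i => (hVfin i).isCompact).of_isClosed_subset hclosed hsub

lemma nat_eq_of_abs_lt_one {a b : ℕ} (h : |(a : ℝ) - b| < 1) : a = b := by
  by_contra hne
  have h2 : (a : ℤ) ≠ b := by exact_mod_cast hne
  have h3 : (1 : ℤ) ≤ |(a : ℤ) - b| := Int.one_le_abs (sub_ne_zero.mpr h2)
  have h4 : (1 : ℝ) ≤ |(a : ℝ) - b| := by exact_mod_cast h3
  linarith

theorem stronglyCts_iff_fan (F : (ℕ → ℕ) → ℕ) :
    StronglyCts F ↔
      ∀ T : Set (List ℕ), IsFan T → ∃ N, ∀ α : ℕ → ℕ, IsPath T α →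
        ∀ β : ℕ → ℕ, seg α N = seg β N → F α = F β := by
  constructor
  · intro hF T hT
    obtain ⟨δ, hδ, h⟩ := hF _ (fan_paths_isCompact hT) 1 one_pos
    obtain ⟨N, hN⟩ : ∃ N : ℕ, (1/2 : ℝ) ^ N < δ :=
      exists_pow_lt_of_lt_one hδ (by norm_num)
    refine ⟨N, fun α hα β hseg => ?_⟩
    have hcyl : β ∈ PiNat.cylinder (E := fun _ => ℕ) α N :=
      PiNat.mem_cylinder_iff.mpr fun i hi => ((seg_eq_iff.mp hseg) i hi).symm
    have hd : dist α β < δ := by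
      have := PiNat.mem_cylinder_iff_dist_le.mp hcyl
      rw [dist_comm] at this
      exact lt_of_le_of_lt this hN
    exact nat_eq_of_abs_lt_one (h α β hα hd)
  · intro h K hK ε hε
    classical
    set T : Set (List ℕ) := {a | ∃ α ∈ K, seg α a.length = a} with hTdef
    have hspread : IsSpread T := by
      refine ⟨fun a => em _, ?_, ?_⟩
      · rintro a b hab ⟨α, hαK, hα⟩
        refine ⟨α, hαK, ?_⟩
        have h1 : seg α a.length <+: b := by
          rw [← hα]; exact seg_prefix α hab.length_le
        have h2 := List.prefix_of_prefix_length_le h1 hab (by rw [seg_length])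
        exact h2.eq_of_length (by rw [seg_length])
      · rintro a ⟨α, hαK, hα⟩
        refine ⟨α a.length, α, hαK, ?_⟩
        have : (a ++ [α a.length]).length = a.length + 1 := by simp
        rw [this, seg_succ, hα]
    have hfan : IsFan T := by
      refine ⟨hspread, fun a _ => ?_⟩
      have hfin : ((fun β : ℕ → ℕ => β a.length) '' K).Finite :=
        (hK.image (continuous_apply a.length)).finite_of_discrete
      obtain ⟨N, hNb⟩ := hfin.bddAbove
      refine ⟨N, fun k hk => ?_⟩
      obtain ⟨α, hαK, hα⟩ := hk
      have hlen : (a ++ [k]).length = a.length + 1 := by simp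
      rw [hlen, seg_succ] at hα
      have hk' : α a.length = k := by
        have := List.append_inj' hα (by simp)
        simpa using this.2
      exact hk' ▸ hNb ⟨α, hαK, rfl⟩
    obtain ⟨N, hN⟩ := h T hfan
    refine ⟨(1/2 : ℝ) ^ N, by positivity, fun x u hx hd => ?_⟩
    have hpath : IsPath T x := fun n => ⟨x, hx, by rw [seg_length]⟩
    have hseg : seg x N = seg u N :=
      seg_eq_iff.mpr fun i hi => PiNat.apply_eq_of_dist_lt hd hi.le
    rw [hN x hpath u hseg]
    simpa using hε
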